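/- Let A and B be bounded linear operators on a complex Hilbert space H, let 0 < t < 1, and set r = min{t, 1−t}. Then ω(AB)^{1/2} ≤ (1/2)‖A + B*‖ + (ω([[O, A],[B, O]]) − ω([[O, (1−t)A + tB*],[(1−t)B + tA*, O]]))/(2r). -/

import Mathlib

open ContinuousLinearMap

/-- The numerical radius of a bounded operator on a complex inner product space:
`ω(T) = sup { |⟨Tx, x⟩| : ‖x‖ = 1 }`. -/
noncomputable def numRadius {E : Type*} [NormedAddCommGroup E] [InnerProductSpace ℂ E]
    (T : E →L[ℂ] E) : ℝ :=
  ⨆ x : { x : E // ‖x‖ = 1 }, ‖(inner ℂ (T x) (x : E) : ℂ)‖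

/-- The block operator `[[O, A], [B, O]]` on the Hilbert space direct sum `H ⊕₂ H`,
sending `(x, y)` to `(A y, B x)`. -/
noncomputable def blockOp {H : Type*} [NormedAddCommGroup H] [InnerProductSpace ℂ H]
    (A B : H →L[ℂ] H) : WithLp 2 (H × H) →L[ℂ] WithLp 2 (H × H) :=
  ((WithLp.prodContinuousLinearEquiv 2 ℂ H H).symm : (H × H) →L[ℂ] WithLp 2 (H × H)) ∘L
    ((A ∘L ContinuousLinearMap.snd ℂ H H).prod (B ∘L ContinuousLinearMap.fst ℂ H H)) ∘L
    ((WithLp.prodContinuousLinearEquiv 2 ℂ H H) : WithLp 2 (H × H) →L[ℂ] H × H)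

section Aux

open ComplexConjugate

variable {H : Type*} [NormedAddCommGroup H] [InnerProductSpace ℂ H]

local notation "⟪" x ", " y "⟫" => @inner ℂ _ _ x y

lemma numRadius_nonneg (T : H →L[ℂ] H) : 0 ≤ numRadius T :=
  Real.iSup_nonneg fun _ => norm_nonneg _

lemma numRadius_le {T : H →L[ℂ] H} {M : ℝ} (hM : 0 ≤ M)
    (h : ∀ x : H, ‖x‖ = 1 → ‖⟪T x, x⟫‖ ≤ M) : numRadius T ≤ M :=
  Real.iSup_le (fun x => h x x.2) hM

lemma le_numRadius (T : H →L[ℂ] H) {x : H} (hx : ‖x‖ = 1) :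
    ‖⟪T x, x⟫‖ ≤ numRadius T := by
  have hb : BddAbove (Set.range fun y : {x : H // ‖x‖ = 1} => ‖⟪T y.1, y.1⟫‖) := by
    refine ⟨‖T‖, ?_⟩
    rintro v ⟨y, rfl⟩
    calc ‖⟪T y.1, y.1⟫‖ ≤ ‖T y.1‖ * ‖y.1‖ := norm_inner_le_norm _ _
      _ ≤ ‖T‖ * ‖y.1‖ * ‖y.1‖ := by gcongr; exact T.le_opNorm _
      _ = ‖T‖ := by rw [y.2]; ring
  exact le_ciSup hb ⟨x, hx⟩

lemma blockOp_apply_fst (A B : H →L[ℂ] H) (z : WithLp 2 (H × H)) :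
    (blockOp A B z).fst = A z.snd := rfl

lemma blockOp_apply_snd (A B : H →L[ℂ] H) (z : WithLp 2 (H × H)) :
    (blockOp A B z).snd = B z.fst := rfl

lemma blockOp_inner (A B : H →L[ℂ] H) (z : WithLp 2 (H × H)) :
    ⟪blockOp A B z, z⟫ = ⟪A z.snd, z.fst⟫ + ⟪B z.fst, z.snd⟫ := by
  rw [WithLp.prod_inner_apply]; rfl

/-- Lemma 1: `ω(AB)^{1/2} ≤ ω(T)` where `T = [[0,A],[B,0]]`. -/
lemma sqrt_numRadius_mul_le (A B : H →L[ℂ] H) :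
    Real.sqrt (numRadius (A * B)) ≤ numRadius (blockOp A B) := by
  set W := numRadius (blockOp A B) with hWdef
  have hW : 0 ≤ W := numRadius_nonneg _
  have key : numRadius (A * B) ≤ W ^ 2 := by
    refine numRadius_le (by positivity) ?_
    intro x hx
    set c : ℂ := ⟪(A * B) x, x⟫ with hcdef
    by_cases hc : c = 0
    · rw [hc]; simpa using sq_nonneg W
    by_cases hBx : B x = 0
    · exfalso
      apply hc
      rw [hcdef, ContinuousLinearMap.mul_apply, hBx]
      simp
    set b : ℝ := ‖B x‖ with hbdef
    have hb : 0 < b := norm_pos_iff.mpr hBx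
    set μ : ℂ := Complex.exp ((↑(-(c.arg / 2)) : ℂ) * Complex.I) with hμdef
    have hμn : ‖μ‖ = 1 := by
      rw [hμdef, Complex.norm_exp_ofReal_mul_I]
    have hμsq : μ ^ 2 = Complex.exp ((↑(-c.arg) : ℂ) * Complex.I) := by
      rw [hμdef, sq, ← Complex.exp_add]
      push_cast
      ring_nf
    have hμ2 : μ ^ 2 * c = (‖c‖ : ℂ) := by
      have habs := Complex.norm_mul_exp_arg_mul_I c
      calc μ ^ 2 * c
          = Complex.exp ((↑(-c.arg) : ℂ) * Complex.I) *
              ((‖c‖ : ℂ) * Complex.exp ((c.arg : ℂ) * Complex.I)) := by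
            rw [hμsq, habs]
        _ = (‖c‖ : ℂ) *
              Complex.exp ((↑(-c.arg) : ℂ) * Complex.I + (c.arg : ℂ) * Complex.I) := by
            rw [Complex.exp_add]; ring
        _ = (‖c‖ : ℂ) := by
            rw [show ((↑(-c.arg) : ℂ) * Complex.I + (c.arg : ℂ) * Complex.I) = 0 by
              push_cast; ring]
            rw [Complex.exp_zero, mul_one]
        _ = (‖c‖ : ℂ) := rfl
    have hμu : conj μ * μ = 1 := by
      rw [Complex.conj_mul', hμn]
      norm_num
    have hkey : μ * c = conj μ * (‖c‖ : ℂ) := by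
      rw [← hμ2, show conj μ * (μ ^ 2 * c) = (conj μ * μ) * (μ * c) by ring, hμu, one_mul]
    -- construct the unit vector z
    set y : H := ((b⁻¹ : ℝ) : ℂ) • B x with hydef
    have hy : ‖y‖ = 1 := by
      rw [hydef, norm_smul, Complex.norm_real, Real.norm_eq_abs, abs_of_nonneg (by positivity), ← hbdef]
      exact inv_mul_cancel₀ (ne_of_gt hb)
    set s : ℂ := (((Real.sqrt 2)⁻¹ : ℝ) : ℂ) with hsdef
    have hsn : ‖s‖ = (Real.sqrt 2)⁻¹ := by
      rw [hsdef, Complex.norm_real, Real.norm_eq_abs, abs_of_nonneg (by positivity)]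
    have hs2 : s * s = 1 / 2 := by
      rw [hsdef]
      norm_cast
      rw [← mul_inv, Real.mul_self_sqrt (by norm_num)]
      norm_num
    set z : WithLp 2 (H × H) := (WithLp.equiv 2 (H × H)).symm (s • μ • x, s • y) with hzdef
    have hzf : z.fst = s • μ • x := rfl
    have hzs : z.snd = s • y := rfl
    have hz : ‖z‖ = 1 := by
      have h2 : ‖z‖ ^ 2 = ‖s • μ • x‖ ^ 2 + ‖s • y‖ ^ 2 := by
        rw [WithLp.prod_norm_sq_eq_of_L2, hzf, hzs]
      rw [norm_smul, norm_smul, norm_smul, hμn, hx, hy, hsn] at h2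
      have h3 : ‖z‖ ^ 2 = 1 := by
        have hsq : ((Real.sqrt 2)⁻¹) ^ 2 = 1 / 2 := by
          rw [← Real.sqrt_inv, Real.sq_sqrt (by norm_num)]; norm_num
        rw [h2]
        linear_combination (2 : ℝ) * hsq
      rw [← Real.sqrt_sq (norm_nonneg z), h3, Real.sqrt_one]
    -- compute the inner product
    set cz : ℂ := ⟪blockOp A B z, z⟫ with hczdef
    have hinner : ⟪B x, B x⟫ = ((b : ℂ)) ^ 2 := by
      rw [inner_self_eq_norm_sq_to_K]; rfl
    have hABy : A y = ((b⁻¹ : ℝ) : ℂ) • (A * B) x := by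
      rw [hydef, map_smul, ContinuousLinearMap.mul_apply]
    have hcz : cz = conj μ * ((((‖c‖ + b ^ 2) / (2 * b) : ℝ)) : ℂ) := by
      rw [hczdef, blockOp_inner, hzf, hzs]
      simp only [map_smul]
      rw [hABy, hydef]
      have hconj : (starRingEnd ℂ) s = s := by rw [hsdef, Complex.conj_ofReal]
      simp only [inner_smul_left, inner_smul_right, Complex.conj_ofReal, hinner, hconj]
      try rw [← hcdef]
      rw [show ((‖c‖ + b ^ 2) / (2 * b) : ℝ) = 2⁻¹ * b⁻¹ * (‖c‖ + b ^ 2) by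
        field_simp]
      push_cast at hs2 hkey ⊢
      linear_combination ((((b : ℝ) : ℂ))⁻¹ * (μ * c)
          + (((b : ℝ) : ℂ))⁻¹ * (starRingEnd ℂ) μ * (((b : ℝ) : ℂ)) ^ 2) * hs2
        + ((1 : ℂ) / 2) * (((b : ℝ) : ℂ))⁻¹ * hkey
    have hczn : ‖cz‖ = (‖c‖ + b ^ 2) / (2 * b) := by
      rw [hcz, norm_mul, RCLike.norm_conj, hμn, one_mul, Complex.norm_real, Real.norm_eq_abs,
        abs_of_nonneg (by positivity)]
    have h1 : ‖cz‖ ≤ W := le_numRadius _ hz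
    have h2 : ‖c‖ ≤ ‖cz‖ ^ 2 := by
      rw [hczn, div_pow, le_div_iff₀ (by positivity)]
      nlinarith [sq_nonneg (‖c‖ - b ^ 2), norm_nonneg c, sq_nonneg b]
    calc ‖c‖ ≤ ‖cz‖ ^ 2 := h2
      _ ≤ W ^ 2 := pow_le_pow_left₀ (norm_nonneg _) h1 2
  calc Real.sqrt (numRadius (A * B)) ≤ Real.sqrt (W ^ 2) := Real.sqrt_le_sqrt key
    _ = W := Real.sqrt_sq hW

lemma re_blockOp_inner_le [CompleteSpace H] (A B : H →L[ℂ] H) (z : WithLp 2 (H × H))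
    (hz : ‖z‖ = 1) : |(⟪blockOp A B z, z⟫).re| ≤ ‖A + adjoint B‖ / 2 := by
  set x := z.fst
  set y := z.snd
  have h1 : (⟪blockOp A B z, z⟫).re = (⟪(A + adjoint B) y, x⟫).re := by
    rw [blockOp_inner]
    rw [ContinuousLinearMap.add_apply, inner_add_left]
    have h2 : (⟪B x, y⟫).re = (⟪adjoint B y, x⟫).re := by
      rw [adjoint_inner_left, ← inner_conj_symm y (B x), Complex.conj_re]
    simp only [Complex.add_re]
    rw [h2]
  rw [h1]
  have h3 : |(⟪(A + adjoint B) y, x⟫).re| ≤ ‖⟪(A + adjoint B) y, x⟫‖ :=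
    Complex.abs_re_le_norm _
  have h4 : ‖⟪(A + adjoint B) y, x⟫‖ ≤ ‖A + adjoint B‖ * ‖y‖ * ‖x‖ :=
    le_trans (norm_inner_le_norm _ _) (by gcongr; exact le_opNorm _ _)
  have h5 : ‖x‖ ^ 2 + ‖y‖ ^ 2 = 1 := by
    rw [← WithLp.prod_norm_sq_eq_of_L2, hz]; norm_num
  nlinarith [norm_nonneg (A + adjoint B), norm_nonneg x, norm_nonneg y,
    sq_nonneg (‖x‖ - ‖y‖)]

lemma blockOp_t_inner [CompleteSpace H] (A B : H →L[ℂ] H) (t : ℝ) (z : WithLp 2 (H × H)) :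
    ⟪blockOp (((1 - t : ℝ) : ℂ) • A + ((t : ℝ) : ℂ) • adjoint B)
        (((1 - t : ℝ) : ℂ) • B + ((t : ℝ) : ℂ) • adjoint A) z, z⟫
      = ((1 - t : ℝ) : ℂ) * ⟪blockOp A B z, z⟫
        + ((t : ℝ) : ℂ) * conj ⟪blockOp A B z, z⟫ := by
  rw [blockOp_inner, blockOp_inner]
  simp only [ContinuousLinearMap.add_apply, ContinuousLinearMap.smul_apply, inner_add_left,
    inner_smul_left, Complex.conj_ofReal, adjoint_inner_left, map_add, inner_conj_symm]
  ring

lemma scalar_ineq (c : ℂ) (t : ℝ) (ht0 : 0 ≤ t) (ht1 : t ≤ 1) :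
    ‖((1 - t : ℝ) : ℂ) * c + ((t : ℝ) : ℂ) * conj c‖
      ≤ |1 - 2 * t| * ‖c‖ + (1 - |1 - 2 * t|) * |c.re| := by
  have hre : ((c.re : ℝ) : ℂ) = (c + conj c) / 2 := by
    rw [Complex.add_conj]; push_cast; ring
  rcases le_or_gt 0 (1 - 2 * t) with hs | hs
  · have hid : ((1 - t : ℝ) : ℂ) * c + ((t : ℝ) : ℂ) * conj c
        = ((1 - 2 * t : ℝ) : ℂ) * c + ((2 * t : ℝ) : ℂ) * ((c.re : ℝ) : ℂ) := by
      rw [hre]; push_cast; ring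
    rw [hid, abs_of_nonneg hs]
    calc ‖((1 - 2 * t : ℝ) : ℂ) * c + ((2 * t : ℝ) : ℂ) * ((c.re : ℝ) : ℂ)‖
        ≤ ‖((1 - 2 * t : ℝ) : ℂ) * c‖ + ‖((2 * t : ℝ) : ℂ) * ((c.re : ℝ) : ℂ)‖ :=
          norm_add_le _ _
      _ = |1 - 2 * t| * ‖c‖ + |2 * t| * |c.re| := by
          simp only [norm_mul, Complex.norm_real, Real.norm_eq_abs, abs_mul]
      _ ≤ (1 - 2 * t) * ‖c‖ + (1 - (1 - 2 * t)) * |c.re| := by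
          rw [abs_of_nonneg hs, abs_of_nonneg (by linarith)]
          apply le_of_eq; ring
  · have hid : ((1 - t : ℝ) : ℂ) * c + ((t : ℝ) : ℂ) * conj c
        = ((2 * t - 1 : ℝ) : ℂ) * conj c + ((2 - 2 * t : ℝ) : ℂ) * ((c.re : ℝ) : ℂ) := by
      rw [hre]; push_cast; ring
    rw [hid, abs_of_neg hs]
    calc ‖((2 * t - 1 : ℝ) : ℂ) * conj c + ((2 - 2 * t : ℝ) : ℂ) * ((c.re : ℝ) : ℂ)‖
        ≤ ‖((2 * t - 1 : ℝ) : ℂ) * conj c‖ + ‖((2 - 2 * t : ℝ) : ℂ) * ((c.re : ℝ) : ℂ)‖ :=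
          norm_add_le _ _
      _ = |2 * t - 1| * ‖c‖ + |2 - 2 * t| * |c.re| := by
          simp only [norm_mul, Complex.norm_real, Real.norm_eq_abs, RCLike.norm_conj, abs_mul]
      _ ≤ -(1 - 2 * t) * ‖c‖ + (1 - -(1 - 2 * t)) * |c.re| := by
          rw [abs_of_nonneg (by linarith), abs_of_nonneg (by linarith)]
          apply le_of_eq; ring

end Aux

/-- For `0 < t < 1` and `r = min{t, 1−t}`:
`ω(AB)^{1/2} ≤ (1/2)‖A+B*‖ + (ω([[O,A],[B,O]]) − ω([[O,(1−t)A+tB*],[(1−t)B+tA*,O]]))/(2r)`. -/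
theorem stmt_16 {H : Type*} [NormedAddCommGroup H] [InnerProductSpace ℂ H] [CompleteSpace H]
    (A B : H →L[ℂ] H) (t r : ℝ) (ht0 : 0 < t) (ht1 : t < 1) (hr : r = min t (1 - t)) :
    Real.sqrt (numRadius (A * B)) ≤
      (1 / 2 : ℝ) * ‖A + adjoint B‖ +
        (numRadius (blockOp A B) -
            numRadius
              (blockOp (((1 - t : ℝ) : ℂ) • A + ((t : ℝ) : ℂ) • adjoint B)
                (((1 - t : ℝ) : ℂ) • B + ((t : ℝ) : ℂ) • adjoint A))) / (2 * r) := by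
  set W := numRadius (blockOp A B) with hWdef
  set V := numRadius (blockOp (((1 - t : ℝ) : ℂ) • A + ((t : ℝ) : ℂ) • adjoint B)
      (((1 - t : ℝ) : ℂ) • B + ((t : ℝ) : ℂ) • adjoint A)) with hVdef
  set N := ‖A + adjoint B‖ with hNdef
  have hN : 0 ≤ N := norm_nonneg _
  have hW : 0 ≤ W := numRadius_nonneg _
  have hr0 : 0 < r := by rw [hr]; exact lt_min ht0 (by linarith)
  have hrt : |1 - 2 * t| = 1 - 2 * r := by
    rw [hr]
    rcases le_total t (1 - t) with h | h
    · rw [min_eq_left h, abs_of_nonneg (by linarith)]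
    · rw [min_eq_right h, abs_of_nonpos (by linarith)]; ring
  have hr12 : 2 * r ≤ 1 := by
    have := abs_nonneg (1 - 2 * t); linarith [hrt]
  -- Lemma 2 : V ≤ (1 - 2r) W + 2r (N/2)
  have hL2 : V ≤ (1 - 2 * r) * W + 2 * r * (N / 2) := by
    rw [hVdef]
    refine numRadius_le (add_nonneg (mul_nonneg (by linarith) hW)
      (mul_nonneg (by linarith) (by linarith))) ?_
    intro z hz
    rw [blockOp_t_inner]
    calc ‖((1 - t : ℝ) : ℂ) * (inner ℂ (blockOp A B z) z : ℂ)
          + ((t : ℝ) : ℂ) * (starRingEnd ℂ) (inner ℂ (blockOp A B z) z : ℂ)‖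
        ≤ |1 - 2 * t| * ‖(inner ℂ (blockOp A B z) z : ℂ)‖
            + (1 - |1 - 2 * t|) * |(inner ℂ (blockOp A B z) z : ℂ).re| :=
          scalar_ineq _ t (le_of_lt ht0) (le_of_lt ht1)
      _ ≤ (1 - 2 * r) * W + 2 * r * (N / 2) := by
          rw [hrt]
          have h1 : ‖(inner ℂ (blockOp A B z) z : ℂ)‖ ≤ W := le_numRadius _ hz
          have h2 : |(inner ℂ (blockOp A B z) z : ℂ).re| ≤ N / 2 :=
            re_blockOp_inner_le A B z hz
          have h3 : (0 : ℝ) ≤ 1 - 2 * r := by linarith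
          have h4 : 1 - (1 - 2 * r) = 2 * r := by ring
          rw [h4]
          gcongr
  have hL1 : Real.sqrt (numRadius (A * B)) ≤ W := sqrt_numRadius_mul_le A B
  have hdiv : W - N / 2 ≤ (W - V) / (2 * r) := by
    rw [le_div_iff₀ (by positivity)]
    nlinarith
  linarith
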